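/- Define P(s) = log Σ_{i=0}^{m-1} t_i(s), where (t_i(s)) is the positive solution of t_i² = Σ_j e^{sφ(i,j)} t_j. Then P is a convex function of s, and if φ is not constant on S × S then P is strictly convex. -/

import Mathlib

open Finset

/-- Strict two-point AM–GM: `p^a * q^b < a*p + b*q` when `p ≠ q`. -/
private lemma amgm2_strict {a b p q : ℝ} (ha : 0 < a) (hb : 0 < b) (hab : a + b = 1)
    (hp : 0 < p) (hq : 0 < q) (hpq : p ≠ q) : p ^ a * q ^ b < a * p + b * q := by
  have h := strictConcaveOn_log_Ioi.2 (Set.mem_Ioi.2 hp) (Set.mem_Ioi.2 hq) hpq ha hb hab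
  have h2 : p ^ a * q ^ b = Real.exp (a • Real.log p + b • Real.log q) := by
    rw [smul_eq_mul, smul_eq_mul, Real.exp_add, Real.rpow_def_of_pos hp,
      Real.rpow_def_of_pos hq, mul_comm a, mul_comm b]
  have h3 : (0:ℝ) < a • p + b • q := by
    simp only [smul_eq_mul]; positivity
  calc p ^ a * q ^ b = Real.exp (a • Real.log p + b • Real.log q) := h2
    _ < Real.exp (Real.log (a • p + b • q)) := Real.exp_lt_exp.2 h
    _ = a * p + b * q := by rw [Real.exp_log h3]; simp [smul_eq_mul]

/-- Hölder inequality for finite sums, with a strictness criterion. -/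
private lemma holder_sum {ι : Type*} [Fintype ι] [Nonempty ι] (f g : ι → ℝ)
    (hf : ∀ j, 0 < f j) (hg : ∀ j, 0 < g j) {a b : ℝ} (ha : 0 < a) (hb : 0 < b)
    (hab : a + b = 1) :
    (∑ j, f j ^ a * g j ^ b ≤ (∑ j, f j) ^ a * (∑ j, g j) ^ b) ∧
    ((∃ j, f j * (∑ k, g k) ≠ g j * (∑ k, f k)) →
      ∑ j, f j ^ a * g j ^ b < (∑ j, f j) ^ a * (∑ j, g j) ^ b) := by
  set F : ℝ := ∑ k, f k with hF
  set G : ℝ := ∑ k, g k with hG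
  have hF0 : 0 < F := Finset.sum_pos (fun j _ => hf j) univ_nonempty
  have hG0 : 0 < G := Finset.sum_pos (fun j _ => hg j) univ_nonempty
  have hFG : 0 < F ^ a * G ^ b := by positivity
  have hterm : ∀ j, f j ^ a * g j ^ b = ((f j / F) ^ a * (g j / G) ^ b) * (F ^ a * G ^ b) := by
    intro j
    rw [Real.div_rpow (hf j).le hF0.le, Real.div_rpow (hg j).le hG0.le]
    have h1 : F ^ a ≠ 0 := (Real.rpow_pos_of_pos hF0 a).ne'
    have h2 : G ^ b ≠ 0 := (Real.rpow_pos_of_pos hG0 b).ne'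
    field_simp
  have hsum1 : ∑ j, (a * (f j / F) + b * (g j / G)) = 1 := by
    rw [Finset.sum_add_distrib, ← Finset.mul_sum, ← Finset.mul_sum, ← Finset.sum_div,
      ← Finset.sum_div, ← hF, ← hG, div_self hF0.ne', div_self hG0.ne', mul_one, mul_one, hab]
  have hweak : ∀ j, (f j / F) ^ a * (g j / G) ^ b ≤ a * (f j / F) + b * (g j / G) := fun j =>
    Real.geom_mean_le_arith_mean2_weighted ha.le hb.le (div_pos (hf j) hF0).le
      (div_pos (hg j) hG0).le hab
  have hrw : ∑ j, f j ^ a * g j ^ b = (∑ j, (f j / F) ^ a * (g j / G) ^ b) * (F ^ a * G ^ b) := by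
    rw [Finset.sum_mul]; exact Finset.sum_congr rfl fun j _ => hterm j
  constructor
  · rw [hrw]
    calc (∑ j, (f j / F) ^ a * (g j / G) ^ b) * (F ^ a * G ^ b)
        ≤ (∑ j, (a * (f j / F) + b * (g j / G))) * (F ^ a * G ^ b) :=
          mul_le_mul_of_nonneg_right (Finset.sum_le_sum fun j _ => hweak j) hFG.le
      _ = F ^ a * G ^ b := by rw [hsum1, one_mul]
  · rintro ⟨j0, hj0⟩
    have hne : f j0 / F ≠ g j0 / G := by
      intro h
      apply hj0
      field_simp at h
      linarith [h]
    have hstrict : ∑ j, (f j / F) ^ a * (g j / G) ^ b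
        < ∑ j, (a * (f j / F) + b * (g j / G)) := by
      refine Finset.sum_lt_sum (fun j _ => hweak j) ⟨j0, Finset.mem_univ _, ?_⟩
      exact amgm2_strict ha hb hab (div_pos (hf j0) hF0) (div_pos (hg j0) hG0) hne
    rw [hrw]
    calc (∑ j, (f j / F) ^ a * (g j / G) ^ b) * (F ^ a * G ^ b)
        < (∑ j, (a * (f j / F) + b * (g j / G))) * (F ^ a * G ^ b) :=
          mul_lt_mul_of_pos_right hstrict hFG
      _ = F ^ a * G ^ b := by rw [hsum1, one_mul]

/-- Comparison with supersolutions: if `u > 0` satisfies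
`∑_j e^{sφ(i,j)} u_j ≤ u_i²` then `t s ≤ u`. -/
private lemma super_le (m : ℕ) (hm : 2 ≤ m) (φ : Fin m → Fin m → ℝ)
    (t : ℝ → Fin m → ℝ) (ht : ∀ s i, 0 < t s i)
    (heq : ∀ s i, (t s i) ^ 2 = ∑ j, Real.exp (s * φ i j) * t s j)
    (s : ℝ) (u : Fin m → ℝ) (hu : ∀ i, 0 < u i)
    (hsup : ∀ i, ∑ j, Real.exp (s * φ i j) * u j ≤ u i ^ 2) :
    ∀ i, t s i ≤ u i := by
  haveI : NeZero m := ⟨by omega⟩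
  set c : ℝ := 1 + ∑ i, t s i / u i with hc
  have hpos : (0:ℝ) < ∑ i, t s i / u i :=
    Finset.sum_pos (fun i _ => div_pos (ht s i) (hu i)) univ_nonempty
  have hc1 : 1 ≤ c := by simp only [hc]; linarith
  have hc0 : 0 < c := by linarith
  have hstep : ∀ n : ℕ, ∀ i, t s i ≤ c ^ ((1/2 : ℝ) ^ n) * u i := by
    intro n
    induction n with
    | zero =>
      intro i
      rw [pow_zero, Real.rpow_one]
      have h1 : t s i / u i ≤ ∑ k, t s k / u k :=
        Finset.single_le_sum (f := fun k => t s k / u k)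
          (fun k _ => (div_pos (ht s k) (hu k)).le) (Finset.mem_univ i)
      have h2 : t s i = (t s i / u i) * u i := (div_mul_cancel₀ _ (hu i).ne').symm
      rw [h2]
      have : t s i / u i ≤ c := by simp only [hc]; linarith
      exact mul_le_mul_of_nonneg_right this (hu i).le
    | succ n ih =>
      intro i
      set ε : ℝ := (1/2 : ℝ) ^ n with hε
      have hε0 : (0:ℝ) ≤ ε := by positivity
      have h1 : t s i ^ 2 ≤ c ^ ε * u i ^ 2 := by
        rw [heq s i]
        calc ∑ j, Real.exp (s * φ i j) * t s j
            ≤ ∑ j, Real.exp (s * φ i j) * (c ^ ε * u j) :=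
              Finset.sum_le_sum fun j _ =>
                mul_le_mul_of_nonneg_left (ih j) (Real.exp_pos _).le
          _ = c ^ ε * ∑ j, Real.exp (s * φ i j) * u j := by
              rw [Finset.mul_sum]; exact Finset.sum_congr rfl fun j _ => by ring
          _ ≤ c ^ ε * u i ^ 2 :=
              mul_le_mul_of_nonneg_left (hsup i) (Real.rpow_pos_of_pos hc0 ε).le
      have h2 : (c ^ ((1/2 : ℝ) ^ (n+1)) * u i) ^ 2 = c ^ ε * u i ^ 2 := by
        rw [mul_pow]
        congr 1
        rw [← Real.rpow_natCast (c ^ ((1/2 : ℝ) ^ (n+1))) 2, ← Real.rpow_mul hc0.le]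
        congr 1
        push_cast
        rw [hε]
        ring
      rw [← h2] at h1
      exact (pow_le_pow_iff_left₀ (ht s i).le
        (mul_pos (Real.rpow_pos_of_pos hc0 _) (hu i)).le two_ne_zero).1 h1
  intro i
  have hlim : Filter.Tendsto (fun n : ℕ => c ^ ((1/2 : ℝ) ^ n) * u i)
      Filter.atTop (nhds (u i)) := by
    have h1 : Filter.Tendsto (fun n : ℕ => ((1:ℝ)/2) ^ n) Filter.atTop (nhds 0) :=
      tendsto_pow_atTop_nhds_zero_of_lt_one (by norm_num) (by norm_num)
    have hcont : Continuous fun e : ℝ => c ^ e * u i := by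
      have : (fun e : ℝ => c ^ e * u i) = fun e : ℝ => Real.exp (Real.log c * e) * u i := by
        funext e; rw [Real.rpow_def_of_pos hc0]
      rw [this]
      continuity
    have h2 := (hcont.tendsto 0).comp h1
    simpa [Real.rpow_zero, Function.comp_def] using h2
  exact ge_of_tendsto hlim (Filter.Eventually.of_forall fun n => hstep n i)

/-- The key inequality: `∑ t(ax+by) ≤ (∑ t x)^a (∑ t y)^b`, strict when `φ` is not
constant and `x ≠ y`. -/
private lemma key_ineq (m : ℕ) (hm : 2 ≤ m) (φ : Fin m → Fin m → ℝ)
    (t : ℝ → Fin m → ℝ) (ht : ∀ s i, 0 < t s i)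
    (heq : ∀ s i, (t s i) ^ 2 = ∑ j, Real.exp (s * φ i j) * t s j)
    (x y a b : ℝ) (ha : 0 < a) (hb : 0 < b) (hab : a + b = 1) :
    ((∑ i, t (a*x+b*y) i) ≤ (∑ i, t x i) ^ a * (∑ i, t y i) ^ b) ∧
    ((∃ i j k l, φ i j ≠ φ k l) → x ≠ y →
      (∑ i, t (a*x+b*y) i) < (∑ i, t x i) ^ a * (∑ i, t y i) ^ b) := by
  haveI : NeZero m := ⟨by omega⟩
  set s : ℝ := a*x+b*y with hs
  set u : Fin m → ℝ := fun i => t x i ^ a * t y i ^ b with hu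
  have hu0 : ∀ i, 0 < u i := fun i =>
    mul_pos (Real.rpow_pos_of_pos (ht x i) a) (Real.rpow_pos_of_pos (ht y i) b)
  -- pointwise factorization
  have hfg : ∀ i j, Real.exp (s * φ i j) * u j
      = (Real.exp (x * φ i j) * t x j) ^ a * (Real.exp (y * φ i j) * t y j) ^ b := by
    intro i j
    rw [Real.mul_rpow (Real.exp_pos _).le (ht x j).le,
      Real.mul_rpow (Real.exp_pos _).le (ht y j).le,
      ← Real.exp_mul, ← Real.exp_mul]
    simp only [hu]
    rw [show Real.exp (x * φ i j * a) * t x j ^ a * (Real.exp (y * φ i j * b) * t y j ^ b)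
        = (Real.exp (x * φ i j * a) * Real.exp (y * φ i j * b)) * (t x j ^ a * t y j ^ b) by ring,
      ← Real.exp_add]
    congr 2
    rw [hs]; ring
  have hsq : ∀ (p : ℝ), 0 < p → ∀ c : ℝ, (p ^ 2) ^ c = (p ^ c) ^ 2 := by
    intro p hp c
    rw [← Real.rpow_natCast p 2, ← Real.rpow_mul hp.le,
      ← Real.rpow_natCast (p ^ c) 2, ← Real.rpow_mul hp.le]
    push_cast; ring_nf
  have hui : ∀ i, u i ^ 2 = (t x i ^ 2) ^ a * (t y i ^ 2) ^ b := by
    intro i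
    simp only [hu]
    rw [hsq _ (ht x i) a, hsq _ (ht y i) b, mul_pow]
  -- inner Hölder
  have hinner : ∀ i, ∑ j, Real.exp (s * φ i j) * u j ≤ u i ^ 2 := by
    intro i
    have h := (holder_sum (fun j => Real.exp (x * φ i j) * t x j)
      (fun j => Real.exp (y * φ i j) * t y j)
      (fun j => mul_pos (Real.exp_pos _) (ht x j))
      (fun j => mul_pos (Real.exp_pos _) (ht y j)) ha hb hab).1
    have hui' := hui i
    rw [heq x i, heq y i] at hui'
    calc ∑ j, Real.exp (s * φ i j) * u j
        = ∑ j, (Real.exp (x * φ i j) * t x j) ^ a * (Real.exp (y * φ i j) * t y j) ^ b :=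
          Finset.sum_congr rfl fun j _ => hfg i j
      _ ≤ (∑ j, Real.exp (x * φ i j) * t x j) ^ a * (∑ j, Real.exp (y * φ i j) * t y j) ^ b := h
      _ = u i ^ 2 := hui'.symm
  have htu : ∀ i, t s i ≤ u i :=
    super_le m hm φ t ht heq s u hu0 hinner
  have houter := holder_sum (t x) (t y) (ht x) (ht y) ha hb hab
  constructor
  · calc ∑ i, t s i ≤ ∑ i, u i := Finset.sum_le_sum fun i _ => htu i
      _ ≤ (∑ i, t x i) ^ a * (∑ i, t y i) ^ b := houter.1
  · intro hφ hxy
    by_cases hprop : ∀ i j,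
        Real.exp (x * φ i j) * t x j * t y i ^ 2 = Real.exp (y * φ i j) * t y j * t x i ^ 2
    · by_cases hpp : ∀ i, t x i * (∑ k, t y k) = t y i * (∑ k, t x k)
      · -- derive that φ is constant, contradiction
        exfalso
        obtain ⟨i, j, k, l, hnephi⟩ := hφ
        set F : ℝ := ∑ k, t x k with hF
        set G : ℝ := ∑ k, t y k with hG
        have hF0 : 0 < F := Finset.sum_pos (fun i _ => ht x i) univ_nonempty
        have hG0 : 0 < G := Finset.sum_pos (fun i _ => ht y i) univ_nonempty
        have hty : ∀ i, t y i = t x i * (G / F) := by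
          intro i
          have := hpp i
          field_simp
          linarith [this]
        have hphi : ∀ i j, φ i j = Real.log (G / F) / (y - x) := by
          intro i j
          have h := hprop i j
          rw [hty j, hty i] at h
          have hGF : 0 < G / F := div_pos hG0 hF0
          have hcancel : Real.exp (x * φ i j) * (G / F) = Real.exp (y * φ i j) := by
            have hne' : t x j * t x i ^ 2 * (G / F) ≠ 0 := by
              have h1 : 0 < t x j := ht x j
              have h2 : 0 < t x i := ht x i
              positivity
            have hkey : (Real.exp (x * φ i j) * (G / F)) * (t x j * t x i ^ 2 * (G / F))
                = Real.exp (y * φ i j) * (t x j * t x i ^ 2 * (G / F)) := by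
              linear_combination h
            exact mul_right_cancel₀ hne' hkey
          have hlog : x * φ i j + Real.log (G / F) = y * φ i j := by
            have := congrArg Real.log hcancel
            rwa [Real.log_mul (Real.exp_pos _).ne' hGF.ne', Real.log_exp, Real.log_exp] at this
          have hyx : y - x ≠ 0 := sub_ne_zero.2 (Ne.symm hxy)
          have hthis : φ i j * (y - x) = Real.log (G / F) := by linear_combination -hlog
          exact (eq_div_iff hyx).2 hthis
        exact hnephi ((hphi i j).trans (hphi k l).symm)
      · -- outer Hölder is strict
        push_neg at hpp
        obtain ⟨i0, hi0⟩ := hpp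
        calc ∑ i, t s i ≤ ∑ i, u i := Finset.sum_le_sum fun i _ => htu i
          _ < (∑ i, t x i) ^ a * (∑ i, t y i) ^ b := houter.2 ⟨i0, hi0⟩
    · -- some inner Hölder is strict
      push_neg at hprop
      obtain ⟨i0, j0, hne0⟩ := hprop
      have hstrict : ∑ j, Real.exp (s * φ i0 j) * u j < u i0 ^ 2 := by
        have h := (holder_sum (fun j => Real.exp (x * φ i0 j) * t x j)
          (fun j => Real.exp (y * φ i0 j) * t y j)
          (fun j => mul_pos (Real.exp_pos _) (ht x j))
          (fun j => mul_pos (Real.exp_pos _) (ht y j)) ha hb hab).2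
          ⟨j0, by rw [heq x i0, heq y i0] at hne0; exact hne0⟩
        have hui0 := hui i0
        rw [heq x i0, heq y i0] at hui0
        calc ∑ j, Real.exp (s * φ i0 j) * u j
            = ∑ j, (Real.exp (x * φ i0 j) * t x j) ^ a * (Real.exp (y * φ i0 j) * t y j) ^ b :=
              Finset.sum_congr rfl fun j _ => hfg i0 j
          _ < (∑ j, Real.exp (x * φ i0 j) * t x j) ^ a
                * (∑ j, Real.exp (y * φ i0 j) * t y j) ^ b := h
          _ = u i0 ^ 2 := hui0.symm
      have hti0 : t s i0 < u i0 := by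
        have h1 : t s i0 ^ 2 < u i0 ^ 2 := by
          rw [heq s i0]
          calc ∑ j, Real.exp (s * φ i0 j) * t s j
              ≤ ∑ j, Real.exp (s * φ i0 j) * u j :=
                Finset.sum_le_sum fun j _ =>
                  mul_le_mul_of_nonneg_left (htu j) (Real.exp_pos _).le
            _ < u i0 ^ 2 := hstrict
        exact (pow_lt_pow_iff_left₀ (ht s i0).le (hu0 i0).le two_ne_zero).1 h1
      calc ∑ i, t s i < ∑ i, u i :=
            Finset.sum_lt_sum (fun i _ => htu i) ⟨i0, Finset.mem_univ _, hti0⟩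
        _ ≤ (∑ i, t x i) ^ a * (∑ i, t y i) ^ b := houter.1

/-- The pressure `P(s) = log ∑_i t_i(s)`, where `(t_i(s))` is the positive solution of the
transfer system, is convex; if `φ` is not constant it is strictly convex. -/
theorem pressure_convex
    (m : ℕ) (hm : 2 ≤ m) (φ : Fin m → Fin m → ℝ)
    (t : ℝ → Fin m → ℝ)
    (ht : ∀ s i, 0 < t s i)
    (heq : ∀ s i, (t s i) ^ 2 = ∑ j, Real.exp (s * φ i j) * t s j)
    (P : ℝ → ℝ) (hP : ∀ s, P s = Real.log (∑ i, t s i)) :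
    ConvexOn ℝ Set.univ P ∧
      ((∃ i j k l, φ i j ≠ φ k l) → StrictConvexOn ℝ Set.univ P) := by
  haveI : NeZero m := ⟨by omega⟩
  have hpos : ∀ s, (0:ℝ) < ∑ i, t s i := fun s =>
    Finset.sum_pos (fun i _ => ht s i) univ_nonempty
  have hlogmul : ∀ (x y a b : ℝ), 0 < a → 0 < b →
      Real.log ((∑ i, t x i) ^ a * (∑ i, t y i) ^ b) = a * P x + b * P y := by
    intro x y a b ha hb
    rw [Real.log_mul (Real.rpow_pos_of_pos (hpos x) a).ne'
      (Real.rpow_pos_of_pos (hpos y) b).ne', Real.log_rpow (hpos x),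
      Real.log_rpow (hpos y), hP, hP]
  constructor
  · refine ⟨convex_univ, ?_⟩
    intro x _ y _ a b ha hb hab
    rcases ha.eq_or_lt with rfl | ha'
    · simp only [zero_smul, zero_add, zero_mul] at *
      rw [hab, one_smul, one_smul]
    rcases hb.eq_or_lt with rfl | hb'
    · rw [add_zero] at hab
      subst hab
      simp
    have hkey := (key_ineq m hm φ t ht heq x y a b ha' hb' hab).1
    simp only [smul_eq_mul]
    rw [hP]
    calc Real.log (∑ i, t (a*x+b*y) i)
        ≤ Real.log ((∑ i, t x i) ^ a * (∑ i, t y i) ^ b) :=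
          Real.log_le_log (hpos _) hkey
      _ = a * P x + b * P y := hlogmul x y a b ha' hb'
  · intro hφ
    refine ⟨convex_univ, ?_⟩
    intro x _ y _ hxy a b ha hb hab
    have hkey := (key_ineq m hm φ t ht heq x y a b ha hb hab).2 hφ hxy
    simp only [smul_eq_mul]
    rw [hP]
    calc Real.log (∑ i, t (a*x+b*y) i)
        < Real.log ((∑ i, t x i) ^ a * (∑ i, t y i) ^ b) :=
          Real.log_lt_log (hpos _) hkey
      _ = a * P x + b * P y := hlogmul x y a b ha hb
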